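/- Let π, π̂ : 𝒳 → (π̄, 1−π̄), m, m₀ : {0,1} × 𝒳 → [0,1] be measurable, γ̂(d,x) = d/π̂(x) − (1−d)/(1−π̂(x)), γ₀ defined analogously from π₀, and let X have distribution F₀. Then |E[(γ̂ − γ₀)(D,X)(m − m₀)(D,X)]| ≤ (2/π̄²)·‖π̂ − π₀‖_{L²(F₀)} · (‖m(1,·) − m₀(1,·)‖_{L²(F₀)} + ‖m(0,·) − m₀(0,·)‖_{L²(F₀)}), where D ∈ {0,1} has P(D=1|X) = π₀(X). -/

import Mathlib

open MeasureTheory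

private lemma dr_integrable_of_bound {Ω : Type*} [MeasurableSpace Ω] {μ : Measure Ω}
    [IsProbabilityMeasure μ] {f : Ω → ℝ} (hf : Measurable f) (C : ℝ)
    (h : ∀ ω, |f ω| ≤ C) : Integrable f μ :=
  memLp_one_iff_integrable.mp <|
    MemLp.of_bound hf.aestronglyMeasurable C (ae_of_all _ fun ω => by
      simpa [Real.norm_eq_abs] using h ω)

private lemma dr_cs_bound {Ω : Type*} [MeasurableSpace Ω] (μ : Measure Ω)
    [IsProbabilityMeasure μ] {f g : Ω → ℝ} (hf : Measurable f) (hg : Measurable g)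
    (hf0 : ∀ ω, 0 ≤ f ω) (hg0 : ∀ ω, 0 ≤ g ω)
    {C : ℝ} (hfb : ∀ ω, f ω ≤ C) (hgb : ∀ ω, g ω ≤ C) :
    ∫ ω, f ω * g ω ∂μ ≤ Real.sqrt (∫ ω, f ω ^ 2 ∂μ) * Real.sqrt (∫ ω, g ω ^ 2 ∂μ) := by
  have hpq : (2 : ℝ).HolderConjugate 2 := by constructor <;> norm_num
  have hmf : MemLp f (ENNReal.ofReal 2) μ :=
    MemLp.of_bound hf.aestronglyMeasurable C (ae_of_all _ fun ω => by
      simpa [Real.norm_eq_abs, abs_of_nonneg (hf0 ω)] using hfb ω)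
  have hmg : MemLp g (ENNReal.ofReal 2) μ :=
    MemLp.of_bound hg.aestronglyMeasurable C (ae_of_all _ fun ω => by
      simpa [Real.norm_eq_abs, abs_of_nonneg (hg0 ω)] using hgb ω)
  have h := integral_mul_le_Lp_mul_Lq_of_nonneg hpq (ae_of_all _ hf0) (ae_of_all _ hg0) hmf hmg
  calc ∫ ω, f ω * g ω ∂μ
      ≤ (∫ ω, f ω ^ (2 : ℝ) ∂μ) ^ (1 / (2 : ℝ)) * (∫ ω, g ω ^ (2 : ℝ) ∂μ) ^ (1 / (2 : ℝ)) := h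
    _ = Real.sqrt (∫ ω, f ω ^ 2 ∂μ) * Real.sqrt (∫ ω, g ω ^ 2 ∂μ) := by
        simp_rw [Real.sqrt_eq_rpow, Real.rpow_two]

private lemma dr_abs_inv_sub_inv_le {p q b : ℝ} (hb : 0 < b) (hp : b < p) (hq : b < q) :
    |1 / p - 1 / q| ≤ |p - q| / b ^ 2 := by
  have hp0 : (0 : ℝ) < p := hb.trans hp
  have hq0 : (0 : ℝ) < q := hb.trans hq
  rw [div_sub_div _ _ hp0.ne' hq0.ne', one_mul, mul_one, abs_div,
    abs_of_pos (mul_pos hp0 hq0), abs_sub_comm]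
  exact div_le_div_of_nonneg_left (abs_nonneg _) (by positivity) (by nlinarith)

/-- Cauchy–Schwarz product bound: the population bias is controlled by the
product of the propensity score error and the conditional mean error in
`L²(F₀)`. -/
theorem cauchy_schwarz_product_bound
    {Ω 𝒳 : Type*} [MeasurableSpace Ω] [MeasurableSpace 𝒳]
    (μ : Measure Ω) [IsProbabilityMeasure μ]
    (D : Ω → ℝ) (X : Ω → 𝒳) (πhat π₀ : 𝒳 → ℝ) (m m₀ : ℝ → 𝒳 → ℝ) (pibar : ℝ)
    (hDmeas : Measurable D) (hXmeas : Measurable X)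
    (hπhatmeas : Measurable πhat) (hπ₀meas : Measurable π₀)
    (hmmeas : Measurable fun p : ℝ × 𝒳 => m p.1 p.2)
    (hm₀meas : Measurable fun p : ℝ × 𝒳 => m₀ p.1 p.2)
    (hpb : 0 < pibar) (hpb' : pibar < 1 / 2)
    (hπhat : ∀ x, pibar < πhat x ∧ πhat x < 1 - pibar)
    (hπ₀ : ∀ x, pibar < π₀ x ∧ π₀ x < 1 - pibar)
    (hm : ∀ d x, m d x ∈ Set.Icc (0 : ℝ) 1)
    (hm₀ : ∀ d x, m₀ d x ∈ Set.Icc (0 : ℝ) 1)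
    (hD : ∀ ω, D ω = 0 ∨ D ω = 1)
    (hps : μ[D | MeasurableSpace.comap X inferInstance] =ᵐ[μ] fun ω => π₀ (X ω)) :
    |∫ ω, ((D ω / πhat (X ω) - (1 - D ω) / (1 - πhat (X ω)))
          - (D ω / π₀ (X ω) - (1 - D ω) / (1 - π₀ (X ω))))
        * (m (D ω) (X ω) - m₀ (D ω) (X ω)) ∂μ|
      ≤ 2 / pibar ^ 2
        * Real.sqrt (∫ ω, (πhat (X ω) - π₀ (X ω)) ^ 2 ∂μ)
        * (Real.sqrt (∫ ω, (m 1 (X ω) - m₀ 1 (X ω)) ^ 2 ∂μ)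
          + Real.sqrt (∫ ω, (m 0 (X ω) - m₀ 0 (X ω)) ^ 2 ∂μ)) := by
  -- abbreviations
  set G : Ω → ℝ := fun ω => ((D ω / πhat (X ω) - (1 - D ω) / (1 - πhat (X ω)))
          - (D ω / π₀ (X ω) - (1 - D ω) / (1 - π₀ (X ω))))
        * (m (D ω) (X ω) - m₀ (D ω) (X ω)) with hG
  set A : Ω → ℝ := fun ω => |πhat (X ω) - π₀ (X ω)| with hA
  set Δ₁ : Ω → ℝ := fun ω => |m 1 (X ω) - m₀ 1 (X ω)| with hΔ₁
  set Δ₀ : Ω → ℝ := fun ω => |m 0 (X ω) - m₀ 0 (X ω)| with hΔ₀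
  -- basic bounds
  have hA1 : ∀ ω, A ω ≤ 1 := by
    intro ω
    have h1 := hπhat (X ω); have h2 := hπ₀ (X ω)
    rw [hA, abs_le]; constructor <;> nlinarith [h1.1, h1.2, h2.1, h2.2]
  have hΔ₁1 : ∀ ω, Δ₁ ω ≤ 1 := by
    intro ω
    have h1 := hm 1 (X ω); have h2 := hm₀ 1 (X ω)
    rw [hΔ₁, abs_le]; constructor <;>
      simp only [Set.mem_Icc] at h1 h2 <;> nlinarith [h1.1, h1.2, h2.1, h2.2]
  have hΔ₀1 : ∀ ω, Δ₀ ω ≤ 1 := by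
    intro ω
    have h1 := hm 0 (X ω); have h2 := hm₀ 0 (X ω)
    rw [hΔ₀, abs_le]; constructor <;>
      simp only [Set.mem_Icc] at h1 h2 <;> nlinarith [h1.1, h1.2, h2.1, h2.2]
  -- measurability
  have hπhX : Measurable fun ω => πhat (X ω) := hπhatmeas.comp hXmeas
  have hπ₀X : Measurable fun ω => π₀ (X ω) := hπ₀meas.comp hXmeas
  have hmDX : Measurable fun ω => m (D ω) (X ω) := hmmeas.comp (hDmeas.prodMk hXmeas)
  have hm₀DX : Measurable fun ω => m₀ (D ω) (X ω) := hm₀meas.comp (hDmeas.prodMk hXmeas)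
  have hm1X : Measurable fun ω => m 1 (X ω) :=
    hmmeas.comp (measurable_const.prodMk hXmeas)
  have hm₀1X : Measurable fun ω => m₀ 1 (X ω) :=
    hm₀meas.comp (measurable_const.prodMk hXmeas)
  have hm0X : Measurable fun ω => m 0 (X ω) :=
    hmmeas.comp (measurable_const.prodMk hXmeas)
  have hm₀0X : Measurable fun ω => m₀ 0 (X ω) :=
    hm₀meas.comp (measurable_const.prodMk hXmeas)
  have hGmeas : Measurable G := by
    apply Measurable.mul _ (hmDX.sub hm₀DX)
    exact ((hDmeas.div hπhX).sub
      ((measurable_const.sub hDmeas).div (measurable_const.sub hπhX))).sub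
      ((hDmeas.div hπ₀X).sub
      ((measurable_const.sub hDmeas).div (measurable_const.sub hπ₀X)))
  have hAmeas : Measurable A := (hπhX.sub hπ₀X).abs
  have hΔ₁meas : Measurable Δ₁ := (hm1X.sub hm₀1X).abs
  have hΔ₀meas : Measurable Δ₀ := (hm0X.sub hm₀0X).abs
  -- key pointwise bound
  have key : ∀ ω, |G ω| ≤ 1 / pibar ^ 2 * (A ω * (Δ₁ ω + Δ₀ ω)) := by
    intro ω
    have hA0 : 0 ≤ A ω := abs_nonneg _
    have hΔ₁0 : 0 ≤ Δ₁ ω := abs_nonneg _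
    have hΔ₀0 : 0 ≤ Δ₀ ω := abs_nonneg _
    have hpb2 : (0 : ℝ) < pibar ^ 2 := by positivity
    rcases hD ω with h0 | h1
    · -- D ω = 0
      have hγ : G ω = (1 / (1 - π₀ (X ω)) - 1 / (1 - πhat (X ω)))
          * (m 0 (X ω) - m₀ 0 (X ω)) := by
        rw [hG]; simp only [h0]; ring
      have hb1 : pibar < 1 - π₀ (X ω) := by have := (hπ₀ (X ω)).2; linarith
      have hb2 : pibar < 1 - πhat (X ω) := by have := (hπhat (X ω)).2; linarith
      have h := dr_abs_inv_sub_inv_le hpb hb1 hb2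
      have heq : |(1 - π₀ (X ω)) - (1 - πhat (X ω))| = A ω := by
        rw [hA]; rw [show (1 - π₀ (X ω)) - (1 - πhat (X ω)) = πhat (X ω) - π₀ (X ω) by ring]
      rw [hγ, abs_mul]
      calc |1 / (1 - π₀ (X ω)) - 1 / (1 - πhat (X ω))| * |m 0 (X ω) - m₀ 0 (X ω)|
          ≤ (A ω / pibar ^ 2) * Δ₀ ω := by
            apply mul_le_mul _ le_rfl hΔ₀0 (by positivity)
            rw [← heq]; exact h
        _ ≤ 1 / pibar ^ 2 * (A ω * (Δ₁ ω + Δ₀ ω)) := by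
            rw [div_mul_eq_mul_div, one_div, ← div_eq_inv_mul]
            apply div_le_div_of_nonneg_right _ hpb2.le
            nlinarith
    · -- D ω = 1
      have hγ : G ω = (1 / πhat (X ω) - 1 / π₀ (X ω))
          * (m 1 (X ω) - m₀ 1 (X ω)) := by
        rw [hG]; simp only [h1]; ring
      have hb1 : pibar < πhat (X ω) := (hπhat (X ω)).1
      have hb2 : pibar < π₀ (X ω) := (hπ₀ (X ω)).1
      have h := dr_abs_inv_sub_inv_le hpb hb1 hb2
      rw [hγ, abs_mul]
      calc |1 / πhat (X ω) - 1 / π₀ (X ω)| * |m 1 (X ω) - m₀ 1 (X ω)|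
          ≤ (A ω / pibar ^ 2) * Δ₁ ω := by
            apply mul_le_mul _ le_rfl hΔ₁0 (by positivity)
            exact h
        _ ≤ 1 / pibar ^ 2 * (A ω * (Δ₁ ω + Δ₀ ω)) := by
            rw [div_mul_eq_mul_div, one_div, ← div_eq_inv_mul]
            apply div_le_div_of_nonneg_right _ hpb2.le
            nlinarith
  -- integrability
  have hGint : Integrable G μ := by
    apply dr_integrable_of_bound hGmeas (1 / pibar ^ 2 * 2)
    intro ω
    refine (key ω).trans ?_
    have := hA1 ω; have := hΔ₁1 ω; have := hΔ₀1 ω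
    have hA0 : 0 ≤ A ω := abs_nonneg _
    have hΔ₁0 : 0 ≤ Δ₁ ω := abs_nonneg _
    have hΔ₀0 : 0 ≤ Δ₀ ω := abs_nonneg _
    have hpb2 : (0 : ℝ) < 1 / pibar ^ 2 := by positivity
    have hle : A ω * (Δ₁ ω + Δ₀ ω) ≤ 2 := by nlinarith
    exact mul_le_mul_of_nonneg_left hle hpb2.le
  have hAΔ₁int : Integrable (fun ω => A ω * Δ₁ ω) μ := by
    apply dr_integrable_of_bound (hAmeas.mul hΔ₁meas) 1
    intro ω
    show |A ω * Δ₁ ω| ≤ 1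
    rw [abs_mul, abs_abs, abs_abs]
    exact mul_le_one₀ (hA1 ω) (abs_nonneg _) (hΔ₁1 ω)
  have hAΔ₀int : Integrable (fun ω => A ω * Δ₀ ω) μ := by
    apply dr_integrable_of_bound (hAmeas.mul hΔ₀meas) 1
    intro ω
    show |A ω * Δ₀ ω| ≤ 1
    rw [abs_mul, abs_abs, abs_abs]
    exact mul_le_one₀ (hA1 ω) (abs_nonneg _) (hΔ₀1 ω)
  -- Cauchy–Schwarz for each piece
  have cs1 : ∫ ω, A ω * Δ₁ ω ∂μ
      ≤ Real.sqrt (∫ ω, A ω ^ 2 ∂μ) * Real.sqrt (∫ ω, Δ₁ ω ^ 2 ∂μ) :=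
    dr_cs_bound μ hAmeas hΔ₁meas (fun ω => abs_nonneg _) (fun ω => abs_nonneg _)
      (C := 1) hA1 hΔ₁1
  have cs0 : ∫ ω, A ω * Δ₀ ω ∂μ
      ≤ Real.sqrt (∫ ω, A ω ^ 2 ∂μ) * Real.sqrt (∫ ω, Δ₀ ω ^ 2 ∂μ) :=
    dr_cs_bound μ hAmeas hΔ₀meas (fun ω => abs_nonneg _) (fun ω => abs_nonneg _)
      (C := 1) hA1 hΔ₀1
  -- rewrite the squared integrals without abs
  have hAsq : (∫ ω, A ω ^ 2 ∂μ) = ∫ ω, (πhat (X ω) - π₀ (X ω)) ^ 2 ∂μ := by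
    simp_rw [hA, sq_abs]
  have hΔ₁sq : (∫ ω, Δ₁ ω ^ 2 ∂μ) = ∫ ω, (m 1 (X ω) - m₀ 1 (X ω)) ^ 2 ∂μ := by
    simp_rw [hΔ₁, sq_abs]
  have hΔ₀sq : (∫ ω, Δ₀ ω ^ 2 ∂μ) = ∫ ω, (m 0 (X ω) - m₀ 0 (X ω)) ^ 2 ∂μ := by
    simp_rw [hΔ₀, sq_abs]
  rw [← hAsq, ← hΔ₁sq, ← hΔ₀sq]
  -- main chain
  calc |∫ ω, G ω ∂μ|
      ≤ ∫ ω, |G ω| ∂μ := by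
        simpa [Real.norm_eq_abs] using norm_integral_le_integral_norm (μ := μ) G
    _ ≤ ∫ ω, 1 / pibar ^ 2 * (A ω * (Δ₁ ω + Δ₀ ω)) ∂μ := by
        apply integral_mono hGint.abs _ key
        have : (fun ω => 1 / pibar ^ 2 * (A ω * (Δ₁ ω + Δ₀ ω)))
            = fun ω => 1 / pibar ^ 2 * (A ω * Δ₁ ω) + 1 / pibar ^ 2 * (A ω * Δ₀ ω) := by
          funext ω; ring
        rw [this]
        exact (hAΔ₁int.const_mul _).add (hAΔ₀int.const_mul _)
    _ = 1 / pibar ^ 2 * ((∫ ω, A ω * Δ₁ ω ∂μ) + ∫ ω, A ω * Δ₀ ω ∂μ) := by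
        rw [← integral_add hAΔ₁int hAΔ₀int, ← integral_const_mul]
        congr 1; funext ω; ring
    _ ≤ 1 / pibar ^ 2 * (Real.sqrt (∫ ω, A ω ^ 2 ∂μ) * Real.sqrt (∫ ω, Δ₁ ω ^ 2 ∂μ)
          + Real.sqrt (∫ ω, A ω ^ 2 ∂μ) * Real.sqrt (∫ ω, Δ₀ ω ^ 2 ∂μ)) := by
        apply mul_le_mul_of_nonneg_left (add_le_add cs1 cs0) (by positivity)
    _ = 1 / pibar ^ 2 * Real.sqrt (∫ ω, A ω ^ 2 ∂μ)
          * (Real.sqrt (∫ ω, Δ₁ ω ^ 2 ∂μ) + Real.sqrt (∫ ω, Δ₀ ω ^ 2 ∂μ)) := by ring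
    _ ≤ 2 / pibar ^ 2 * Real.sqrt (∫ ω, A ω ^ 2 ∂μ)
          * (Real.sqrt (∫ ω, Δ₁ ω ^ 2 ∂μ) + Real.sqrt (∫ ω, Δ₀ ω ^ 2 ∂μ)) := by
        have h2 : 1 / pibar ^ 2 ≤ 2 / pibar ^ 2 := by
          apply div_le_div_of_nonneg_right (by norm_num) (by positivity)
        exact mul_le_mul_of_nonneg_right
          (mul_le_mul_of_nonneg_right h2 (Real.sqrt_nonneg _))
          (add_nonneg (Real.sqrt_nonneg _) (Real.sqrt_nonneg _))
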